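/- arXiv:2511.14822 — 2 statements merged into one kernel-verified Lean document; each statement's English description precedes it below -/
import Mathlib

section
/- (Well-definedness of the Hohenberg–Kohn functional.) Let v, v' ∈ V, let Γ be a pure ground state of ι(v)+W and Γ' a pure ground state of ι(v')+W, and suppose ι*(Γ) = ι*(Γ'). Then Tr(Γ W) = Tr(Γ' W). -/
open Filter Topology

noncomputable section

variable {V H : Type*}
  [AddCommGroup V] [Module ℝ V]
  [NormedAddCommGroup H] [InnerProductSpace ℂ H]

/-- The real expectation value `⟨ψ, T ψ⟩` of an operator `T` in the vector `ψ`. -/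
def expectation (T : H →ₗ[ℂ] H) (ψ : H) : ℝ := (inner ℂ ψ (T ψ) : ℂ).re

/-- The ground state energy of the Hamiltonian `ι v + W`. -/
def energy (ι : V →ₗ[ℝ] (H →ₗ[ℂ] H)) (W : H →ₗ[ℂ] H) (v : V) : ℝ :=
  sInf {r : ℝ | ∃ ψ : H, ‖ψ‖ = 1 ∧ r = expectation (ι v + W) ψ}

/-- The density `ι*(|ψ⟩⟨ψ|)` of the pure state given by the unit vector `ψ`,
as an element of the dual space `V*`. -/
def pureDensity (ι : V →ₗ[ℝ] (H →ₗ[ℂ] H)) (ψ : H) : Module.Dual ℝ V where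
  toFun v := expectation (ι v) ψ
  map_add' v w := by simp [expectation, inner_add_right]
  map_smul' c v := by
    simp only [map_smul, LinearMap.smul_apply, expectation, RingHom.id_apply, smul_eq_mul]
    rw [← algebraMap_smul ℂ c ((ι v) ψ), Complex.coe_algebraMap, inner_smul_right]
    simp

/-- An ensemble state: a positive semidefinite operator of unit trace. -/
def IsEnsembleState (Γ : H →ₗ[ℂ] H) : Prop :=
  Γ.IsSymmetric ∧ (∀ x : H, 0 ≤ (inner ℂ x (Γ x) : ℂ).re) ∧ LinearMap.trace ℂ H Γ = 1

/-- The density `ι*(Γ)` of a state `Γ`, `v ↦ Tr(Γ ι(v))`, as an element of `V*`. -/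
def traceDensity (ι : V →ₗ[ℝ] (H →ₗ[ℂ] H)) (Γ : H →ₗ[ℂ] H) : Module.Dual ℝ V where
  toFun v := (LinearMap.trace ℂ H (ι v ∘ₗ Γ)).re
  map_add' v w := by simp [map_add, LinearMap.add_comp]
  map_smul' c v := by
    simp only [map_smul, RingHom.id_apply, smul_eq_mul]
    rw [← algebraMap_smul ℂ c (ι v), LinearMap.smul_comp, map_smul, Complex.coe_algebraMap]
    simp

/-- The pure (Levy–Lieb) universal functional `F_p`. -/
def Fp (ι : V →ₗ[ℝ] (H →ₗ[ℂ] H)) (W : H →ₗ[ℂ] H) (ρ : Module.Dual ℝ V) : ℝ :=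
  sInf {r : ℝ | ∃ ψ : H, ‖ψ‖ = 1 ∧ pureDensity ι ψ = ρ ∧ r = expectation W ψ}

/-- The ensemble (Lieb/Valone) universal functional `F_e`. -/
def Fe (ι : V →ₗ[ℝ] (H →ₗ[ℂ] H)) (W : H →ₗ[ℂ] H) (ρ : Module.Dual ℝ V) : ℝ :=
  sInf {r : ℝ | ∃ Γ : H →ₗ[ℂ] H, IsEnsembleState Γ ∧ traceDensity ι Γ = ρ ∧
    r = (LinearMap.trace ℂ H (W ∘ₗ Γ)).re}

/-- The weight space of a functional `α ∈ V*`. -/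
def weightSpace (ι : V →ₗ[ℝ] (H →ₗ[ℂ] H)) (α : Module.Dual ℝ V) : Submodule ℂ H where
  carrier := {ψ : H | ∀ v : V, ι v ψ = (α v : ℂ) • ψ}
  add_mem' := by
    intro a b ha hb v
    rw [map_add, ha v, hb v, smul_add]
  zero_mem' := by intro v; simp
  smul_mem' := by
    intro c x hx v
    rw [LinearMap.map_smul, hx v, smul_comm]

/-- The set of weights of an abelian functional theory. -/
def weights (ι : V →ₗ[ℝ] (H →ₗ[ℂ] H)) : Set (Module.Dual ℝ V) :=
  {α : Module.Dual ℝ V | weightSpace ι α ≠ ⊥}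

/-- The derivative of the density map along the set of pure states at `|Ψ⟩⟨Ψ|`,
applied to the tangent vector `φ ⊥ Ψ`: the functional `v ↦ 2 Re⟨φ, ι(v)Ψ⟩`. -/
def derivDensity (ι : V →ₗ[ℝ] (H →ₗ[ℂ] H)) (Ψ φ : H) : Module.Dual ℝ V where
  toFun v := 2 * (inner ℂ φ (ι v Ψ) : ℂ).re
  map_add' v w := by simp [inner_add_right]; ring
  map_smul' c v := by
    simp only [map_smul, LinearMap.smul_apply, RingHom.id_apply, smul_eq_mul]
    rw [← algebraMap_smul ℂ c ((ι v) Ψ), Complex.coe_algebraMap, inner_smul_right]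
    simp; ring

/-- `ρ` is a relative interior point of the convex set `C` (i.e. an interior point
of `C` within its affine span): every point of `C` lies on a segment inside `C`
having `ρ` in its (open) interior. -/
def IsRelInterior {M : Type*} [AddCommGroup M] [Module ℝ M] (C : Set M) (ρ : M) : Prop :=
  ρ ∈ C ∧ ∀ σ ∈ C, ∃ τ ∈ C, ∃ t : ℝ, 0 < t ∧ t < 1 ∧ ρ = t • σ + (1 - t) • τ

/-- Strong orthogonality: componentwise orthogonality in every weight space. -/
def StronglyOrthogonal [FiniteDimensional ℂ H] (ι : V →ₗ[ℝ] (H →ₗ[ℂ] H)) (Φ Φ' : H) : Prop :=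
  ∀ α : Module.Dual ℝ V, weightSpace ι α ≠ ⊥ →
    (inner ℂ (Submodule.orthogonalProjectionOnto (weightSpace ι α) Φ)
        (Submodule.orthogonalProjectionOnto (weightSpace ι α) Φ') : ℂ) = 0

/-- The `k`-convex hull of a set. -/
def convk {M : Type*} [AddCommGroup M] [Module ℝ M] (k : ℕ) (X : Set M) : Set M :=
  {ρ : M | ∃ (t : Fin k → ℝ) (x : Fin k → M),
    (∀ i, 0 ≤ t i) ∧ (∑ i, t i) = 1 ∧ (∀ i, x i ∈ X) ∧ (∑ i, t i • x i) = ρ}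

/-- The operator `A ⊗ id` on `H ⊗ ℂᵏ ≅ H ⊕ ⋯ ⊕ H` (k summands). -/
def opBar (k : ℕ) (A : H →ₗ[ℂ] H) :
    (PiLp 2 fun _ : Fin k => H) →ₗ[ℂ] (PiLp 2 fun _ : Fin k => H) where
  toFun x := WithLp.toLp 2 (fun i => A (x i))
  map_add' x y := by ext i; simp [PiLp.add_apply]
  map_smul' c x := by ext i; simp [PiLp.smul_apply]

/-- The potential map `v ↦ ι(v) ⊗ id` of the `k`-convexified functional theory. -/
def potBar (k : ℕ) (ι : V →ₗ[ℝ] (H →ₗ[ℂ] H)) :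
    V →ₗ[ℝ] ((PiLp 2 fun _ : Fin k => H) →ₗ[ℂ] (PiLp 2 fun _ : Fin k => H)) where
  toFun v := opBar k (ι v)
  map_add' v w := by
    apply LinearMap.ext; intro x; ext i
    simp [opBar, map_add]
  map_smul' c v := by
    apply LinearMap.ext; intro x; ext i
    simp [opBar, map_smul]

/-- The subspace of potentials mapped to real multiples of the identity operator. -/
def scalarPart (ι : V →ₗ[ℝ] (H →ₗ[ℂ] H)) : Submodule ℝ V where
  carrier := {v : V | ∃ c : ℝ, ι v = c • (LinearMap.id : H →ₗ[ℂ] H)}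
  add_mem' := by
    rintro a b ⟨c, hc⟩ ⟨d, hd⟩
    exact ⟨c + d, by rw [map_add, hc, hd, add_smul]⟩
  zero_mem' := ⟨0, by simp⟩
  smul_mem' := by
    rintro a v ⟨c, hc⟩
    exact ⟨a * c, by rw [map_smul, hc, smul_smul]⟩

lemma expectation_add (A B : H →ₗ[ℂ] H) (χ : H) :
    expectation (A + B) χ = expectation A χ + expectation B χ := by
  simp [expectation, inner_add_right]

set_option synthInstance.maxHeartbeats 400000 in
lemma energy_le [FiniteDimensional ℂ H] (ι : V →ₗ[ℝ] (H →ₗ[ℂ] H)) (W : H →ₗ[ℂ] H)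
    (v : V) (χ : H) (hχ : ‖χ‖ = 1) : energy ι W v ≤ expectation (ι v + W) χ := by
  apply csInf_le
  · refine ⟨-‖(ι v + W).toContinuousLinearMap‖, ?_⟩
    rintro r ⟨φ, hφ, rfl⟩
    have h1 : |(inner ℂ φ ((ι v + W) φ) : ℂ).re| ≤ ‖(inner ℂ φ ((ι v + W) φ) : ℂ)‖ :=
      Complex.abs_re_le_norm _
    have h2 : ‖(inner ℂ φ ((ι v + W) φ) : ℂ)‖ ≤ ‖φ‖ * ‖(ι v + W) φ‖ :=
      norm_inner_le_norm _ _
    have h3 : ‖(ι v + W) φ‖ = ‖(ι v + W).toContinuousLinearMap φ‖ := rfl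
    have h4 : ‖(ι v + W).toContinuousLinearMap φ‖ ≤ ‖(ι v + W).toContinuousLinearMap‖ * ‖φ‖ :=
      ContinuousLinearMap.le_opNorm _ _
    have : ‖(inner ℂ φ ((ι v + W) φ) : ℂ)‖ ≤ ‖(ι v + W).toContinuousLinearMap‖ := by
      calc ‖(inner ℂ φ ((ι v + W) φ) : ℂ)‖ ≤ ‖φ‖ * ‖(ι v + W) φ‖ := h2
        _ ≤ 1 * (‖(ι v + W).toContinuousLinearMap‖ * 1) := by
            rw [hφ]; rw [h3]; rw [hφ] at h4; simpa using h4
        _ = ‖(ι v + W).toContinuousLinearMap‖ := by ring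
    have := (abs_le.mp (h1.trans this)).1
    simpa [expectation] using this
  · exact ⟨χ, hχ, rfl⟩

/-- well-definedness of the Hohenberg–Kohn functional. -/
theorem hk_functional_well_defined [FiniteDimensional ℝ V] [FiniteDimensional ℂ H] [Nontrivial H]
    (ι : V →ₗ[ℝ] (H →ₗ[ℂ] H)) (W : H →ₗ[ℂ] H)
    (hι : ∀ v : V, (ι v).IsSymmetric) (hW : W.IsSymmetric)
    (v v' : V) (ψ ψ' : H)
    (hψ : ‖ψ‖ = 1) (hg : expectation (ι v + W) ψ = energy ι W v)
    (hψ' : ‖ψ'‖ = 1) (hg' : expectation (ι v' + W) ψ' = energy ι W v')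
    (hρ : pureDensity ι ψ = pureDensity ι ψ') :
    expectation W ψ = expectation W ψ' := by
  have hd : ∀ u : V, expectation (ι u) ψ = expectation (ι u) ψ' := fun u =>
    LinearMap.congr_fun hρ u
  have h1 : expectation (ι v + W) ψ ≤ expectation (ι v + W) ψ' := by
    rw [hg]; exact energy_le ι W v ψ' hψ'
  have h2 : expectation (ι v' + W) ψ' ≤ expectation (ι v' + W) ψ := by
    rw [hg']; exact energy_le ι W v' ψ hψ
  rw [expectation_add, expectation_add, hd v] at h1
  rw [expectation_add, expectation_add, hd v'] at h2
  linarith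

end
end

section
/- (Legendre-transform relation between energy and universal functionals.) For every v ∈ V, E(v) = min over ρ ∈ ι*(P) of (⟨ρ, v⟩ + F_p(ρ)) and E(v) = min over ρ ∈ ι*(E) of (⟨ρ, v⟩ + F_e(ρ)), where in each case the minimum is attained. -/
open Filter Topology

noncomputable section

variable {V H : Type*}
  [AddCommGroup V] [Module ℝ V]
  [NormedAddCommGroup H] [InnerProductSpace ℂ H]

section Aux

variable {V H : Type*}
  [AddCommGroup V] [Module ℝ V]
  [NormedAddCommGroup H] [InnerProductSpace ℂ H]

lemma trace_onb [FiniteDimensional ℂ H] {n : ℕ} (b : OrthonormalBasis (Fin n) ℂ H)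
    (T : H →ₗ[ℂ] H) :
    LinearMap.trace ℂ H T = ∑ i, (inner ℂ (b i) (T (b i)) : ℂ) := by
  rw [LinearMap.trace_eq_matrix_trace ℂ b.toBasis, Matrix.trace]
  refine Finset.sum_congr rfl fun i _ => ?_
  rw [Matrix.diag_apply, LinearMap.toMatrix_apply, OrthonormalBasis.coe_toBasis_repr_apply,
    OrthonormalBasis.repr_apply_apply, OrthonormalBasis.coe_toBasis]

/-- Rank-one operator `|ψ⟩⟨ψ|`. -/
def proj1 (ψ : H) : H →ₗ[ℂ] H where
  toFun x := (inner ℂ ψ x : ℂ) • ψ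
  map_add' x y := by simp [inner_add_right, add_smul]
  map_smul' c x := by simp [inner_smul_right, smul_smul]

lemma trace_comp_proj1 [FiniteDimensional ℂ H] (A : H →ₗ[ℂ] H) (ψ : H) :
    LinearMap.trace ℂ H (A ∘ₗ proj1 ψ) = (inner ℂ ψ (A ψ) : ℂ) := by
  rw [trace_onb (stdOrthonormalBasis ℂ H)]
  have : ∀ i, (inner ℂ ((stdOrthonormalBasis ℂ H) i) ((A ∘ₗ proj1 ψ) ((stdOrthonormalBasis ℂ H) i)) : ℂ)
      = (inner ℂ ψ ((stdOrthonormalBasis ℂ H) i) : ℂ) * (inner ℂ ((stdOrthonormalBasis ℂ H) i) (A ψ) : ℂ) := by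
    intro i
    simp [proj1, LinearMap.comp_apply, inner_smul_right, map_smul]
  simp_rw [this]
  exact (stdOrthonormalBasis ℂ H).sum_inner_mul_inner ψ (A ψ)

lemma proj1_isEnsembleState [FiniteDimensional ℂ H] {ψ : H} (hψ : ‖ψ‖ = 1) :
    IsEnsembleState (proj1 ψ) := by
  refine ⟨?_, ?_, ?_⟩
  · intro x y
    simp only [proj1, LinearMap.coe_mk, AddHom.coe_mk]
    rw [inner_smul_left, inner_smul_right, inner_conj_symm]
    ring
  · intro x
    simp only [proj1, LinearMap.coe_mk, AddHom.coe_mk]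
    rw [inner_smul_right, ← inner_conj_symm ψ x, mul_comm, Complex.mul_conj]
    simpa using Complex.normSq_nonneg _
  · have : proj1 ψ = LinearMap.id ∘ₗ proj1 ψ := by ext x; simp
    rw [this, trace_comp_proj1]
    simp [inner_self_eq_norm_sq_to_K, hψ]

/-- Expectation additivity. -/
lemma expectation_add_s3 (S T : H →ₗ[ℂ] H) (ψ : H) :
    expectation (S + T) ψ = expectation S ψ + expectation T ψ := by
  simp [expectation, inner_add_right]

/-- Key bound: `Re Tr(A Γ) ≥ E` if `⟨ψ, A ψ⟩ ≥ E` on the unit sphere. -/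
lemma le_trace_comp [FiniteDimensional ℂ H] (A Γ : H →ₗ[ℂ] H) (_hA : A.IsSymmetric)
    (hΓ : IsEnsembleState Γ) {E : ℝ}
    (hE : ∀ ψ : H, ‖ψ‖ = 1 → E ≤ expectation A ψ) :
    E ≤ (LinearMap.trace ℂ H (A ∘ₗ Γ)).re := by
  obtain ⟨hsym, hpos, htr⟩ := hΓ
  have hn : Module.finrank ℂ H = Module.finrank ℂ H := rfl
  let b := hsym.eigenvectorBasis hn
  let μ := hsym.eigenvalues hn
  have happ : ∀ i, Γ (b i) = (μ i : ℂ) • b i := fun i =>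
    (hsym.hasEigenvector_eigenvectorBasis hn i).apply_eq_smul
  have hb1 : ∀ i, ‖b i‖ = 1 := fun i => b.orthonormal.1 i
  have hbs : ∀ i, (inner ℂ (b i) (b i) : ℂ) = 1 := by
    intro i; rw [inner_self_eq_norm_sq_to_K, hb1]; norm_num
  have hdiag : ∀ i, (inner ℂ (b i) (Γ (b i)) : ℂ) = (μ i : ℂ) := by
    intro i; rw [happ i, inner_smul_right, hbs i, mul_one]
  have hμ0 : ∀ i, 0 ≤ μ i := by
    intro i
    have := hpos (b i)
    rwa [hdiag i, Complex.ofReal_re] at this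
  have hsum : ∑ i, μ i = 1 := by
    have h1 := trace_onb b Γ
    rw [htr] at h1
    simp_rw [hdiag] at h1
    have : ((∑ i, μ i : ℝ) : ℂ) = 1 := by push_cast; rw [← h1]
    exact_mod_cast this
  have htrace : (LinearMap.trace ℂ H (A ∘ₗ Γ)).re = ∑ i, μ i * (inner ℂ (b i) (A (b i)) : ℂ).re := by
    rw [trace_onb b]
    rw [Complex.re_sum]
    refine Finset.sum_congr rfl fun i _ => ?_
    rw [LinearMap.comp_apply, happ i, map_smul, inner_smul_right]
    rw [Complex.re_ofReal_mul]
  rw [htrace]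
  calc E = ∑ i, μ i * E := by rw [← Finset.sum_mul, hsum, one_mul]
    _ ≤ ∑ i, μ i * (inner ℂ (b i) (A (b i)) : ℂ).re := by
        refine Finset.sum_le_sum fun i _ => ?_
        exact mul_le_mul_of_nonneg_left (hE (b i) (hb1 i)) (hμ0 i)

/-- The energy minimum is attained on the unit sphere. -/
lemma exists_energy_min [FiniteDimensional ℂ H] [Nontrivial H] (T : H →ₗ[ℂ] H) :
    ∃ ψ : H, ‖ψ‖ = 1 ∧ ∀ φ : H, ‖φ‖ = 1 → expectation T ψ ≤ expectation T φ := by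
  obtain ⟨x, hx⟩ := exists_ne (0 : H)
  have hsne : (Metric.sphere (0 : H) 1).Nonempty :=
    ⟨(‖x‖⁻¹ : ℝ) • x, mem_sphere_zero_iff_norm.2 (by
      rw [norm_smul, norm_inv, norm_norm, inv_mul_cancel₀ (norm_ne_zero_iff.2 hx)])⟩
  have hcont : Continuous fun ψ : H => expectation T ψ := by
    have hT : Continuous T := LinearMap.continuous_of_finiteDimensional T
    exact Complex.continuous_re.comp (Continuous.inner continuous_id hT)
  obtain ⟨ψ, hψs, hmin⟩ := (isCompact_sphere (0 : H) 1).exists_isMinOn hsne hcont.continuousOn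
  refine ⟨ψ, by simpa using hψs, fun φ hφ => hmin (by simp [hφ])⟩

end Aux

/-- Legendre-transform relation between the energy and the
universal functionals, with attained minima. -/
theorem energy_legendre_transform [FiniteDimensional ℝ V] [FiniteDimensional ℂ H] [Nontrivial H]
    (ι : V →ₗ[ℝ] (H →ₗ[ℂ] H)) (W : H →ₗ[ℂ] H)
    (hι : ∀ v : V, (ι v).IsSymmetric) (hW : W.IsSymmetric)
    (v : V) :
    IsLeast {r : ℝ | ∃ ρ : Module.Dual ℝ V,
        (∃ ψ : H, ‖ψ‖ = 1 ∧ pureDensity ι ψ = ρ) ∧ r = ρ v + Fp ι W ρ} (energy ι W v) ∧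
    IsLeast {r : ℝ | ∃ ρ : Module.Dual ℝ V,
        (∃ Γ : H →ₗ[ℂ] H, IsEnsembleState Γ ∧ traceDensity ι Γ = ρ) ∧
        r = ρ v + Fe ι W ρ} (energy ι W v) := by
  obtain ⟨ψ0, hψ0, hmin⟩ := exists_energy_min (ι v + W)
  have hEdef : energy ι W v = expectation (ι v + W) ψ0 :=
    IsLeast.csInf_eq ⟨⟨ψ0, hψ0, rfl⟩, by rintro r ⟨φ, hφ, rfl⟩; exact hmin φ hφ⟩
  have hpd : ∀ ψ : H, pureDensity ι ψ v = expectation (ι v) ψ := fun ψ => rfl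
  have htd : ∀ Γ : H →ₗ[ℂ] H, traceDensity ι Γ v = (LinearMap.trace ℂ H (ι v ∘ₗ Γ)).re :=
    fun Γ => rfl
  have hsplit : ∀ ψ : H, expectation (ι v + W) ψ = expectation (ι v) ψ + expectation W ψ :=
    fun ψ => expectation_add_s3 _ _ ψ
  constructor
  · constructor
    · refine ⟨pureDensity ι ψ0, ⟨ψ0, hψ0, rfl⟩, ?_⟩
      have hFp : Fp ι W (pureDensity ι ψ0) = expectation W ψ0 := by
        refine IsLeast.csInf_eq ⟨⟨ψ0, hψ0, rfl, rfl⟩, ?_⟩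
        rintro r ⟨ψ, hψ, hρ, rfl⟩
        have h1 : expectation (ι v) ψ = expectation (ι v) ψ0 := by
          have := congrArg (fun ρ : Module.Dual ℝ V => ρ v) hρ
          simpa [hpd] using this
        have h2 := hmin ψ hψ
        rw [hsplit ψ, hsplit ψ0, h1] at h2
        linarith
      rw [hEdef, hFp, hsplit ψ0, hpd]
    · rintro r ⟨ρ, ⟨ψ1, hψ1, hρ1⟩, rfl⟩
      have hle : energy ι W v - ρ v ≤ Fp ι W ρ := by
        refine le_csInf ⟨expectation W ψ1, ψ1, hψ1, hρ1, rfl⟩ ?_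
        rintro r ⟨ψ, hψ, hρ, rfl⟩
        have h1 : ρ v = expectation (ι v) ψ := by rw [← hρ, hpd]
        have h2 := hmin ψ hψ
        rw [hsplit ψ] at h2
        rw [hEdef]
        linarith
      linarith
  · have hsym : (ι v + W).IsSymmetric := (hι v).add hW
    have hTlow : ∀ Γ : H →ₗ[ℂ] H, IsEnsembleState Γ →
        energy ι W v ≤ (LinearMap.trace ℂ H ((ι v + W) ∘ₗ Γ)).re := by
      intro Γ hΓ
      rw [hEdef]
      exact le_trace_comp (ι v + W) Γ hsym hΓ (fun ψ hψ => hmin ψ hψ)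
    have hTsplit : ∀ Γ : H →ₗ[ℂ] H, (LinearMap.trace ℂ H ((ι v + W) ∘ₗ Γ)).re
        = (LinearMap.trace ℂ H (ι v ∘ₗ Γ)).re + (LinearMap.trace ℂ H (W ∘ₗ Γ)).re := by
      intro Γ
      rw [LinearMap.add_comp, map_add, Complex.add_re]
    have hΓ0 : IsEnsembleState (proj1 ψ0) := proj1_isEnsembleState hψ0
    have hρ0v : traceDensity ι (proj1 ψ0) v = expectation (ι v) ψ0 := by
      rw [htd, trace_comp_proj1]; rfl
    have hWΓ0 : (LinearMap.trace ℂ H (W ∘ₗ proj1 ψ0)).re = expectation W ψ0 := by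
      rw [trace_comp_proj1]; rfl
    constructor
    · refine ⟨traceDensity ι (proj1 ψ0), ⟨proj1 ψ0, hΓ0, rfl⟩, ?_⟩
      have hFe : Fe ι W (traceDensity ι (proj1 ψ0)) = expectation W ψ0 := by
        refine IsLeast.csInf_eq ⟨⟨proj1 ψ0, hΓ0, rfl, hWΓ0.symm⟩, ?_⟩
        rintro r ⟨Γ, hΓ, hρ, rfl⟩
        have h1 : (LinearMap.trace ℂ H (ι v ∘ₗ Γ)).re = expectation (ι v) ψ0 := by
          rw [← htd, hρ, hρ0v]
        have h2 := hTlow Γ hΓ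
        rw [hTsplit, h1, hEdef, hsplit ψ0] at h2
        linarith
      rw [hEdef, hFe, hsplit ψ0, hρ0v]
    · rintro r ⟨ρ, ⟨Γ1, hΓ1, hρ1⟩, rfl⟩
      have hle : energy ι W v - ρ v ≤ Fe ι W ρ := by
        refine le_csInf ⟨_, Γ1, hΓ1, hρ1, rfl⟩ ?_
        rintro r ⟨Γ, hΓ, hρ, rfl⟩
        have h2 := hTlow Γ hΓ
        rw [hTsplit] at h2
        have h1 : ρ v = (LinearMap.trace ℂ H (ι v ∘ₗ Γ)).re := by rw [← hρ, htd]
        linarith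
      linarith

end
end
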